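/- Let A ∈ ℝⁿˣⁿ, B ∈ ℝⁿˣᵐ, C ∈ ℝᵐˣⁿ, D ∈ ℝᵐˣᵐ, and let Q = Qᵀ ∈ ℝⁿˣⁿ satisfy the passivity LMI (Π := [[Q,0],[0,I_m]]·[[−A,−B],[C,D]] + [[−A,−B],[C,D]]ᵀ·[[Q,0],[0,I_m]] positive semidefinite). Assume (C,A) is observable. Then the subspace M := { ((−Ax−Bu, Cx+Du), (Qx, u)) : x ∈ ℝⁿ, u ∈ ℝᵐ } ⊆ ℝⁿ⁺ᵐ × ℝⁿ⁺ᵐ has dimension n + m and is a maximally monotone subspace of ℝⁿ⁺ᵐ × ℝⁿ⁺ᵐ. -/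

import Mathlib

open Matrix

/-- The passivity LMI. -/
def PassivityLMI {n m : ℕ} (A : Matrix (Fin n) (Fin n) ℝ) (B : Matrix (Fin n) (Fin m) ℝ)
    (C : Matrix (Fin m) (Fin n) ℝ) (D : Matrix (Fin m) (Fin m) ℝ)
    (Q : Matrix (Fin n) (Fin n) ℝ) : Prop :=
  (fromBlocks Q 0 0 (1 : Matrix (Fin m) (Fin m) ℝ) * fromBlocks (-A) (-B) C D +
    (fromBlocks (-A) (-B) C D)ᵀ * fromBlocks Q 0 0 (1 : Matrix (Fin m) (Fin m) ℝ)).PosSemidef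

/-- A subspace `M ⊆ ℝⁿ⁺ᵐ × ℝⁿ⁺ᵐ` (with `ℝⁿ⁺ᵐ ≅ ℝⁿ × ℝᵐ`) is monotone if `wᵀv ≥ 0`
for all `(v,w) ∈ M`. -/
def IsMonotoneSubspacePair {n m : ℕ}
    (M : Submodule ℝ (((Fin n → ℝ) × (Fin m → ℝ)) × ((Fin n → ℝ) × (Fin m → ℝ)))) : Prop :=
  ∀ p ∈ M, 0 ≤ p.2.1 ⬝ᵥ p.1.1 + p.2.2 ⬝ᵥ p.1.2

lemma myDotSelfNonneg {N : Type*} [Fintype N] (v : N → ℝ) : 0 ≤ v ⬝ᵥ v :=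
  Finset.sum_nonneg fun i _ => mul_self_nonneg (v i)

/-- The quadratic form of `P*K + Kᵀ*P` for symmetric `P`. -/
lemma myQuadForm {N : Type*} [Fintype N] [DecidableEq N] (P K : Matrix N N ℝ)
    (hP : Pᵀ = P) (z : N → ℝ) :
    z ⬝ᵥ ((P * K + Kᵀ * P) *ᵥ z) = 2 * ((P *ᵥ z) ⬝ᵥ (K *ᵥ z)) := by
  rw [add_mulVec, dotProduct_add, ← mulVec_mulVec, ← mulVec_mulVec]
  have h1 : z ⬝ᵥ P *ᵥ (K *ᵥ z) = (P *ᵥ z) ⬝ᵥ (K *ᵥ z) := by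
    rw [dotProduct_mulVec]
    congr 1
    conv_rhs => rw [← hP]
    rw [mulVec_transpose]
  have h2 : z ⬝ᵥ Kᵀ *ᵥ (P *ᵥ z) = (P *ᵥ z) ⬝ᵥ (K *ᵥ z) := by
    rw [dotProduct_mulVec, vecMul_transpose, dotProduct_comm]
  rw [h1, h2]; ring

section Aux

variable {n m : ℕ} (A : Matrix (Fin n) (Fin n) ℝ) (B : Matrix (Fin n) (Fin m) ℝ)
    (C : Matrix (Fin m) (Fin n) ℝ) (D : Matrix (Fin m) (Fin m) ℝ)
    (Q : Matrix (Fin n) (Fin n) ℝ)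

/-- The parametrizing linear map `(x,u) ↦ ((−Ax−Bu, Cx+Du),(Qx,u))`. -/
noncomputable def myLmap : ((Fin n → ℝ) × (Fin m → ℝ)) →ₗ[ℝ]
    (((Fin n → ℝ) × (Fin m → ℝ)) × ((Fin n → ℝ) × (Fin m → ℝ))) :=
  LinearMap.prod
    (LinearMap.prod
      (-(A.mulVecLin.comp (LinearMap.fst ℝ _ _)) - B.mulVecLin.comp (LinearMap.snd ℝ _ _))
      (C.mulVecLin.comp (LinearMap.fst ℝ _ _) + D.mulVecLin.comp (LinearMap.snd ℝ _ _)))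
    (LinearMap.prod (Q.mulVecLin.comp (LinearMap.fst ℝ _ _)) (LinearMap.snd ℝ _ _))

lemma myLmap_apply (x : Fin n → ℝ) (u : Fin m → ℝ) :
    myLmap A B C D Q (x, u) = ((-(A *ᵥ x) - B *ᵥ u, C *ᵥ x + D *ᵥ u), (Q *ᵥ x, u)) := rfl

/-- The key quadratic inequality coming from the passivity LMI. -/
lemma myKeyIneq (hQ : Q.IsSymm) (hLMI : PassivityLMI A B C D Q)
    (x : Fin n → ℝ) (u : Fin m → ℝ) :
    0 ≤ (Q *ᵥ x) ⬝ᵥ (-(A *ᵥ x) - B *ᵥ u) + u ⬝ᵥ (C *ᵥ x + D *ᵥ u) := by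
  have hPsymm : (fromBlocks Q 0 0 (1 : Matrix (Fin m) (Fin m) ℝ))ᵀ =
      fromBlocks Q 0 0 (1 : Matrix (Fin m) (Fin m) ℝ) := by
    rw [fromBlocks_transpose, hQ.eq, transpose_zero, transpose_zero, transpose_one]
  have h := hLMI.dotProduct_mulVec_nonneg (Sum.elim x u)
  rw [star_trivial, myQuadForm _ _ hPsymm] at h
  have hPz : fromBlocks Q 0 0 (1 : Matrix (Fin m) (Fin m) ℝ) *ᵥ Sum.elim x u =
      Sum.elim (Q *ᵥ x) u := by
    rw [fromBlocks_mulVec]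
    simp [Sum.elim_comp_inl, Sum.elim_comp_inr]
  have hKz : fromBlocks (-A) (-B) C D *ᵥ Sum.elim x u =
      Sum.elim (-(A *ᵥ x) - B *ᵥ u) (C *ᵥ x + D *ᵥ u) := by
    rw [fromBlocks_mulVec]
    simp [Sum.elim_comp_inl, Sum.elim_comp_inr, neg_mulVec, sub_eq_add_neg]
  rw [hPz, hKz, sumElim_dotProduct_sumElim] at h
  linarith

end Aux

/-- For an observable passive system, the subspace
`M = {((−Ax−Bu, Cx+Du),(Qx,u)) : x ∈ ℝⁿ, u ∈ ℝᵐ}` has dimension `n+m` and is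
maximally monotone. -/
theorem passive_observable_maximal_monotone {n m : ℕ}
    (A : Matrix (Fin n) (Fin n) ℝ) (B : Matrix (Fin n) (Fin m) ℝ)
    (C : Matrix (Fin m) (Fin n) ℝ) (D : Matrix (Fin m) (Fin m) ℝ)
    (Q : Matrix (Fin n) (Fin n) ℝ) (hQ : Q.IsSymm)
    (hLMI : PassivityLMI A B C D Q)
    (hobs : ∀ z : Fin n → ℝ, (∀ k < n, (C * A ^ k) *ᵥ z = 0) → z = 0)
    (M : Submodule ℝ (((Fin n → ℝ) × (Fin m → ℝ)) × ((Fin n → ℝ) × (Fin m → ℝ))))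
    (hM : ∀ p, p ∈ M ↔ ∃ (x : Fin n → ℝ) (u : Fin m → ℝ),
      p = ((-(A *ᵥ x) - B *ᵥ u, C *ᵥ x + D *ᵥ u), (Q *ᵥ x, u))) :
    Module.finrank ℝ M = n + m ∧ IsMonotoneSubspacePair M ∧
      ∀ M', IsMonotoneSubspacePair M' → M ≤ M' → M' = M := by
  have hfr : Module.finrank ℝ ((Fin n → ℝ) × (Fin m → ℝ)) = n + m := by
    rw [Module.finrank_prod, Module.finrank_fin_fun, Module.finrank_fin_fun]
  -- M is the range of the linear map
  have hMrange : M = LinearMap.range (myLmap A B C D Q) := by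
    ext p
    rw [hM]
    constructor
    · rintro ⟨x, u, rfl⟩; exact ⟨(x, u), (myLmap_apply A B C D Q x u)⟩
    · rintro ⟨⟨x, u⟩, rfl⟩; exact ⟨x, u, (myLmap_apply A B C D Q x u).symm⟩
  -- injectivity of the parametrizing map
  have hinj : Function.Injective (myLmap A B C D Q) := by
    rw [injective_iff_map_eq_zero]
    rintro ⟨x, u⟩ h
    rw [myLmap_apply] at h
    simp only [Prod.mk_eq_zero] at h
    obtain ⟨⟨h1, h2⟩, _, h4⟩ := h
    subst h4
    simp only [mulVec_zero, sub_zero, neg_eq_zero, add_zero] at h1 h2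
    have hx : x = 0 := by
      apply hobs
      intro k _
      cases k with
      | zero => simpa using h2
      | succ j =>
        rw [← mulVec_mulVec, pow_succ, ← mulVec_mulVec, h1, mulVec_zero, mulVec_zero]
    simp [hx]
  -- dimension
  have hdim : Module.finrank ℝ M = n + m := by
    rw [hMrange, LinearMap.finrank_range_of_inj hinj, hfr]
  refine ⟨hdim, ?_, ?_⟩
  · -- monotone
    intro p hp
    obtain ⟨x, u, rfl⟩ := (hM p).mp hp
    exact myKeyIneq A B C D Q hQ hLMI x u
  · -- maximal
    intro M' hmono hle
    -- the map p ↦ p.1 + p.2 is injective on M'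
    let φ : M' →ₗ[ℝ] ((Fin n → ℝ) × (Fin m → ℝ)) :=
      (LinearMap.fst ℝ _ _ + LinearMap.snd ℝ _ _).comp M'.subtype
    have hφinj : Function.Injective φ := by
      rw [injective_iff_map_eq_zero]
      rintro ⟨p, hp⟩ h
      have hsum : p.1 + p.2 = 0 := h
      rw [Prod.ext_iff] at hsum
      simp only [Prod.fst_add, Prod.snd_add, Prod.fst_zero, Prod.snd_zero] at hsum
      obtain ⟨e1, e2⟩ := hsum
      have d1 : p.2.1 = -p.1.1 := eq_neg_of_add_eq_zero_right e1
      have d2 : p.2.2 = -p.1.2 := eq_neg_of_add_eq_zero_right e2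
      have hm := hmono p hp
      rw [d1, d2, neg_dotProduct, neg_dotProduct] at hm
      have n1 := myDotSelfNonneg p.1.1
      have n2 := myDotSelfNonneg p.1.2
      have z1 : p.1.1 = 0 := dotProduct_self_eq_zero.mp (by linarith)
      have z2 : p.1.2 = 0 := dotProduct_self_eq_zero.mp (by linarith)
      have hp1 : p.1 = 0 := by rw [Prod.ext_iff]; exact ⟨by simp [z1], by simp [z2]⟩
      have hp2 : p.2 = 0 := by
        rw [Prod.ext_iff]; exact ⟨by simp [d1, z1], by simp [d2, z2]⟩
      apply Subtype.ext
      rw [Prod.ext_iff]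
      exact ⟨by simp [hp1], by simp [hp2]⟩
    have hle' : Module.finrank ℝ M' ≤ n + m := by
      have := LinearMap.finrank_le_finrank_of_injective hφinj
      rwa [hfr] at this
    exact (Submodule.eq_of_le_of_finrank_le hle (by rw [hdim]; exact hle')).symm
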